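/- Let δ > d > 0 be integers, γ > 0 an integer, A ≥ 0, B > d integers, and define A_n = γ_n − (γ − A) d^{n-1} and B_n = B d^{n-1}, where γ_n = γ Σ_{i=0}^{n-1} δ^{n-1-i} d^i. If (B − d)/(γ − A) > (δ − d)/γ (with γ > A), then for all n ≥ 1: (B_n − d^n)/(γ_n − A_n) = (B − d)/(γ − A) > (δ^n − d^n)/γ_n; in particular δ^n is strictly smaller than the y-intercept of the line through (γ_n, d^n) and (A_n, B_n). -/
import Mathlib


theorem stmt_18 (δ d γ A B : ℤ) (hd : 0 < d) (hδd : d < δ) (hγ : 0 < γ)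
    (hA : 0 ≤ A) (hAγ : A < γ) (hB : d < B)
    (hslope : ((δ : ℝ) - d) / γ < ((B : ℝ) - d) / ((γ : ℝ) - A)) :
    ∀ n : ℕ, 1 ≤ n →
      (((B * d ^ (n - 1) : ℤ) : ℝ) - (d : ℝ) ^ n) /
          (((γ * ∑ i ∈ Finset.range n, δ ^ (n - 1 - i) * d ^ i : ℤ) : ℝ) -
            (((γ * ∑ i ∈ Finset.range n, δ ^ (n - 1 - i) * d ^ i - (γ - A) * d ^ (n - 1) : ℤ)) : ℝ))
        = ((B : ℝ) - d) / ((γ : ℝ) - A) ∧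
      ((δ : ℝ) ^ n - (d : ℝ) ^ n) / ((γ * ∑ i ∈ Finset.range n, δ ^ (n - 1 - i) * d ^ i : ℤ) : ℝ)
        < ((B : ℝ) - d) / ((γ : ℝ) - A) ∧
      (δ : ℝ) ^ n
        < (d : ℝ) ^ n +
            ((γ * ∑ i ∈ Finset.range n, δ ^ (n - 1 - i) * d ^ i : ℤ) : ℝ) *
              (((B : ℝ) - d) / ((γ : ℝ) - A)) := by
  intro n hn
  set S : ℤ := ∑ i ∈ Finset.range n, δ ^ (n - 1 - i) * d ^ i with hSdef
  have hδ0 : (0:ℤ) < δ := hd.trans hδd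
  -- S > 0
  have hSpos : 0 < S := by
    apply Finset.sum_pos
    · intro i _
      exact mul_pos (pow_pos hδ0 _) (pow_pos hd _)
    · exact Finset.nonempty_range_iff.mpr (by omega)
  -- key identity: (δ - d) * S = δ^n - d^n
  have hkey : (δ - d) * S = δ ^ n - d ^ n := by
    have h1 : S = ∑ i ∈ Finset.range n, δ ^ i * d ^ (n - 1 - i) := by
      rw [hSdef, ← Finset.sum_range_reflect]
      apply Finset.sum_congr rfl
      intro i hi
      simp only [Finset.mem_range] at hi
      have h : n - 1 - (n - 1 - i) = i := by omega
      rw [h]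
    rw [h1, mul_comm, geom_sum₂_mul]
  have hdn : d ^ n = d * d ^ (n - 1) := by
    conv_lhs => rw [show n = 1 + (n - 1) by omega]
    rw [pow_add, pow_one]
  have hγA : (0:ℝ) < (γ:ℝ) - A := by
    have : A < γ := hAγ
    push_cast; linarith [(by exact_mod_cast hAγ : (A:ℝ) < γ)]
  have hdpow : (0:ℝ) < (d:ℝ) ^ (n - 1) := pow_pos (by exact_mod_cast hd) _
  have hγS : (0:ℝ) < ((γ * S : ℤ) : ℝ) := by
    exact_mod_cast mul_pos hγ hSpos
  constructor
  · -- first equality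
    have e1 : ((B * d ^ (n - 1) : ℤ) : ℝ) - (d:ℝ) ^ n
        = ((B:ℝ) - d) * (d:ℝ) ^ (n - 1) := by
      have : (d:ℝ) ^ n = (d:ℝ) * (d:ℝ) ^ (n - 1) := by exact_mod_cast congrArg Int.cast hdn
      push_cast
      rw [this]; ring
    have e2 : ((γ * S : ℤ) : ℝ) - ((γ * S - (γ - A) * d ^ (n - 1) : ℤ) : ℝ)
        = ((γ:ℝ) - A) * (d:ℝ) ^ (n - 1) := by push_cast; ring
    rw [e1, e2, mul_div_mul_right _ _ (ne_of_gt hdpow)]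
  have h2 : ((δ : ℝ) ^ n - (d : ℝ) ^ n) / ((γ * S : ℤ) : ℝ) < ((B : ℝ) - d) / ((γ : ℝ) - A) := by
    have e3 : ((δ : ℝ) ^ n - (d : ℝ) ^ n) / ((γ * S : ℤ) : ℝ) = ((δ:ℝ) - d) / γ := by
      have : (δ:ℝ) ^ n - (d:ℝ) ^ n = ((δ:ℝ) - d) * (S:ℤ) := by
        exact_mod_cast congrArg Int.cast hkey.symm
      rw [this]
      push_cast
      rw [mul_div_mul_right _ _ (by exact_mod_cast hSpos.ne' : ((S:ℤ):ℝ) ≠ 0)]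
    rw [e3]; exact hslope
  refine ⟨h2, ?_⟩
  have := (div_lt_iff₀ hγS).mp h2
  linarith
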